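/- In the random-actions model with a stubborn agent holding opinion 0: let T = [[1,0],[r,Q]] be a K×K stochastic matrix with Q irreducible and r having at least one positive entry, α ∈ (0,1), X[n] = (0, Y[n]) ∈ [0,1]^K updated by X[n+1] = (1−α)X[n] + α T A[n] where the stubborn agent's action is 0 with probability 1 and the remaining actions are conditionally independent Bernoulli(X_k[n]) given X[n]. Then every ordinary agent's opinion converges in probability to 0: for every ε > 0 and every k, P(X_k[n] > ε) → 0 as n → ∞. -/

import Mathlib

open MeasureTheory Matrix Filter

/-- Entries of powers of an entrywise-nonnegative matrix are nonnegative. -/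
lemma pow_entry_nonneg {K : ℕ} {M : Matrix (Fin K) (Fin K) ℝ}
    (hnn : ∀ i j, 0 ≤ M i j) : ∀ n i j, 0 ≤ (M ^ n) i j := by
  intro n
  induction n with
  | zero => intro i j; simp [Matrix.one_apply]; positivity
  | succ n ih =>
    intro i j
    rw [pow_succ, Matrix.mul_apply]
    exact Finset.sum_nonneg fun l _ => mul_nonneg (ih i l) (hnn l j)

/-- Row sums of powers of a substochastic irreducible-reaching matrix tend to 0. -/
lemma herding_aux {K : ℕ} (M : Matrix (Fin K) (Fin K) ℝ)
    (hnn : ∀ i j, 0 ≤ M i j) (hrow : ∀ i, ∑ j, M i j ≤ 1)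
    (i0 : Fin K) (h0 : ∑ j, M i0 j < 1)
    (hreach : ∀ i, ∃ n, 0 < (M ^ n) i i0) :
    ∀ i, Tendsto (fun n => ∑ j, (M ^ n) i j) atTop (nhds 0) := by
  have hpow := pow_entry_nonneg hnn
  set S : ℕ → Fin K → ℝ := fun n i => ∑ j, (M ^ n) i j with hS
  -- recursion: S (n+1) i = ∑ l, (M^n) i l * S 1 l
  have hrec : ∀ n i, S (n + 1) i = ∑ l, (M ^ n) i l * (∑ j, M l j) := by
    intro n i
    simp only [hS, pow_succ, Matrix.mul_apply]
    rw [Finset.sum_comm]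
    exact Finset.sum_congr rfl fun l _ => (Finset.mul_sum _ _ _).symm
  have hSnn : ∀ n i, 0 ≤ S n i := fun n i => Finset.sum_nonneg fun j _ => hpow n i j
  have hanti : ∀ n i, S (n + 1) i ≤ S n i := by
    intro n i
    rw [hrec]
    calc ∑ l, (M ^ n) i l * (∑ j, M l j) ≤ ∑ l, (M ^ n) i l * 1 :=
          Finset.sum_le_sum fun l _ => mul_le_mul_of_nonneg_left (hrow l) (hpow n i l)
      _ = S n i := by simp [hS]
  have hanti' : ∀ {a b : ℕ} (i : Fin K), a ≤ b → S b i ≤ S a i := by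
    intro a b i hab
    induction b with
    | zero => simp [Nat.le_zero.mp hab]
    | succ b ih =>
      rcases Nat.lt_or_ge a (b+1) with h | h
      · exact (hanti b i).trans (ih (Nat.lt_succ_iff.mp h))
      · have : a = b + 1 := le_antisymm hab h
        simp [this]
  have hS1 : ∀ n i, S n i ≤ 1 := by
    intro n i
    have := hanti' i (Nat.zero_le n)
    simpa [hS, Matrix.one_apply] using this
  -- for each i there is N with S N i < 1
  have hlt : ∀ i, ∃ N, S N i < 1 := by
    intro i
    obtain ⟨n, hn⟩ := hreach i
    refine ⟨n + 1, ?_⟩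
    have key : S (n + 1) i ≤ S n i - (M ^ n) i i0 * (1 - ∑ j, M i0 j) := by
      rw [hrec]
      have : ∀ l ∈ Finset.univ, (M ^ n) i l * (∑ j, M l j) ≤
          (M ^ n) i l * (1 - if l = i0 then (1 - ∑ j, M i0 j) else 0) := by
        intro l _
        apply mul_le_mul_of_nonneg_left _ (hpow n i l)
        by_cases h : l = i0
        · subst h; simp
        · simp [h, hrow l]
      calc ∑ l, (M ^ n) i l * (∑ j, M l j)
          ≤ ∑ l, (M ^ n) i l * (1 - if l = i0 then (1 - ∑ j, M i0 j) else 0) :=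
            Finset.sum_le_sum this
        _ = S n i - (M ^ n) i i0 * (1 - ∑ j, M i0 j) := by
            simp only [mul_sub, mul_one, Finset.sum_sub_distrib, mul_ite, mul_zero]
            simp [hS, Finset.sum_ite_eq' Finset.univ i0]
    have hpos : 0 < (M ^ n) i i0 * (1 - ∑ j, M i0 j) :=
      mul_pos hn (by linarith)
    have := hS1 n i
    linarith [key]
  -- uniform N
  choose Nf hNf using hlt
  have hne : Finset.Nonempty (Finset.univ : Finset (Fin K)) := ⟨i0, Finset.mem_univ _⟩
  set N : ℕ := Finset.univ.sup Nf with hNdef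
  have hNlt : ∀ i, S N i < 1 := fun i =>
    lt_of_le_of_lt (hanti' i (Finset.le_sup (Finset.mem_univ i))) (hNf i)
  set ρ : ℝ := Finset.univ.sup' hne (S N) with hρ
  have hρlt : ρ < 1 := (Finset.sup'_lt_iff hne).mpr fun i _ => hNlt i
  have hρnn : 0 ≤ ρ := le_trans (hSnn N i0) (Finset.le_sup' _ (Finset.mem_univ i0))
  have hρle : ∀ i, S N i ≤ ρ := fun i => Finset.le_sup' _ (Finset.mem_univ i)
  have hNpos : 0 < N := by
    rcases Nat.eq_zero_or_pos N with h | h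
    · exfalso
      have := hNlt i0
      rw [h] at this
      simp [hS, Matrix.one_apply] at this
    · exact h
  -- geometric decay
  have hgeo : ∀ k i, S (k * N) i ≤ ρ ^ k := by
    intro k
    induction k with
    | zero => intro i; simpa using hS1 0 i
    | succ k ih =>
      intro i
      have h1 : (k + 1) * N = N + k * N := by ring
      have hrec2 : S (N + k * N) i = ∑ l, (M ^ N) i l * S (k * N) l := by
        simp only [hS, pow_add, Matrix.mul_apply]
        rw [Finset.sum_comm]
        exact Finset.sum_congr rfl fun l _ => (Finset.mul_sum _ _ _).symm
      rw [h1, hrec2]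
      calc ∑ l, (M ^ N) i l * S (k * N) l ≤ ∑ l, (M ^ N) i l * ρ ^ k :=
            Finset.sum_le_sum fun l _ => mul_le_mul_of_nonneg_left (ih l) (hpow N i l)
        _ = S N i * ρ ^ k := by rw [← Finset.sum_mul]
        _ ≤ ρ * ρ ^ k := mul_le_mul_of_nonneg_right (hρle i) (pow_nonneg hρnn k)
        _ = ρ ^ (k + 1) := (pow_succ' ρ k).symm
  intro i
  have hub : ∀ n, S n i ≤ ρ ^ (n / N) := fun n =>
    le_trans (hanti' i (Nat.div_mul_le_self n N)) (hgeo (n / N) i)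
  have hto : Tendsto (fun n : ℕ => ρ ^ (n / N)) atTop (nhds 0) :=
    (tendsto_pow_atTop_nhds_zero_of_lt_one hρnn hρlt).comp
      (tendsto_atTop_atTop_of_monotone (fun a b h => Nat.div_le_div_right h)
        (fun b => ⟨b * N, (Nat.le_div_iff_mul_le hNpos).mpr le_rfl⟩))
  exact tendsto_of_tendsto_of_tendsto_of_le_of_le tendsto_const_nhds hto
    (fun n => hSnn n i) hub

/-- Herding in the random-actions model with a stubborn agent: with trust
matrix `T = [[1,0],[r,Q]]` stochastic, `Q` irreducible, `r` having a positive
entry, stubborn agent `0` always playing action `0` and holding opinion `0`,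
and the ordinary agents' actions conditionally independent
Bernoulli(`X_k[n]`) given `X[n]`, every ordinary agent's opinion converges in
probability to the stubborn agent's opinion `0`. -/
theorem random_actions_stubborn_herding
    {Ω : Type*} {m0 : MeasurableSpace Ω} (μ : Measure Ω) [IsProbabilityMeasure μ]
    {K : ℕ} (T : Matrix (Fin (K + 1)) (Fin (K + 1)) ℝ)
    (hTnonneg : ∀ i j, 0 ≤ T i j)
    (hTstoch : ∀ i, ∑ j, T i j = 1)
    (hstub : T 0 0 = 1)
    (hstubrow : ∀ j : Fin K, T 0 j.succ = 0)
    (Q : Matrix (Fin K) (Fin K) ℝ) (hQ : ∀ i j : Fin K, Q i j = T i.succ j.succ)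
    (r : Fin K → ℝ) (hr : ∀ i : Fin K, r i = T i.succ 0)
    (hirred : ∀ i j : Fin K, ∃ n : ℕ, 0 < n ∧ 0 < (Q ^ n) i j)
    (hrpos : ∃ i : Fin K, 0 < r i)
    (α : ℝ) (hα : α ∈ Set.Ioo (0 : ℝ) 1)
    (X A : ℕ → Ω → Fin (K + 1) → ℝ)
    (hXmeas : ∀ n, Measurable (X n)) (hAmeas : ∀ n, Measurable (A n))
    (hX01 : ∀ n ω k, X n ω k ∈ Set.Icc (0 : ℝ) 1)
    (hXstub : ∀ n ω, X n ω 0 = 0)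
    (hA01 : ∀ n ω k, A n ω k = 0 ∨ A n ω k = 1)
    (hAstub : ∀ n ω, A n ω 0 = 0)
    (m : ℕ → MeasurableSpace Ω)
    (hm : ∀ n, m n = MeasurableSpace.comap (X n) inferInstance)
    (hle : ∀ n, m n ≤ m0)
    (hmean : ∀ n k, μ[(fun ω => A n ω k)|m n] =ᵐ[μ] fun ω => X n ω k)
    (hpair : ∀ n k l, k ≠ l →
      μ[(fun ω => A n ω k * A n ω l)|m n] =ᵐ[μ] fun ω => X n ω k * X n ω l)
    (hupd : ∀ n ω, X (n + 1) ω = (1 - α) • X n ω + α • (T *ᵥ A n ω)) :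
    ∀ ε : ℝ, 0 < ε → ∀ k : Fin K,
      Tendsto (fun n => μ {ω | ε < X n ω k.succ}) atTop (nhds 0) := by
  obtain ⟨i0, hi0⟩ := hrpos
  obtain ⟨hα0, hα1⟩ := hα
  -- basic facts about Q and r
  have hQnn : ∀ i j, 0 ≤ Q i j := fun i j => (hQ i j).symm ▸ hTnonneg i.succ j.succ
  have hrnn : ∀ i, 0 ≤ r i := fun i => (hr i).symm ▸ hTnonneg i.succ 0
  have hQrow : ∀ i, ∑ j, Q i j = 1 - r i := by
    intro i
    have := hTstoch i.succ
    rw [Fin.sum_univ_succ] at this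
    have h2 : ∑ j : Fin K, Q i j = ∑ j : Fin K, T i.succ j.succ :=
      Finset.sum_congr rfl fun j _ => hQ i j
    rw [h2, hr i]
    linarith
  -- the mean-dynamics matrix
  set M : Matrix (Fin K) (Fin K) ℝ := (1 - α) • (1 : Matrix (Fin K) (Fin K) ℝ) + α • Q
    with hM
  have hMapp : ∀ i j, M i j = (1 - α) * (1 : Matrix (Fin K) (Fin K) ℝ) i j + α * Q i j := by
    intro i j; simp [hM]
  have hMnn : ∀ i j, 0 ≤ M i j := by
    intro i j
    rw [hMapp]
    have : (0:ℝ) ≤ (1 : Matrix (Fin K) (Fin K) ℝ) i j := by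
      rw [Matrix.one_apply]; positivity
    nlinarith [hQnn i j]
  have hMrow : ∀ i, ∑ j, M i j = 1 - α * r i := by
    intro i
    simp only [hMapp]
    rw [Finset.sum_add_distrib, ← Finset.mul_sum, ← Finset.mul_sum, hQrow]
    have h1 : ∑ j, (1 : Matrix (Fin K) (Fin K) ℝ) i j = 1 := by
      simp [Matrix.one_apply]
    rw [h1]; ring
  have hMrowle : ∀ i, ∑ j, M i j ≤ 1 := by
    intro i; rw [hMrow]; nlinarith [hrnn i]
  have hM0 : ∑ j, M i0 j < 1 := by
    rw [hMrow]; nlinarith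
  -- M^n dominates α^n Q^n
  have hQpow := pow_entry_nonneg hQnn
  have hMpow := pow_entry_nonneg hMnn
  have hdom : ∀ n i j, α ^ n * (Q ^ n) i j ≤ (M ^ n) i j := by
    intro n
    induction n with
    | zero => intro i j; simp
    | succ n ih =>
      intro i j
      have hMQ : ∀ l j, α * Q l j ≤ M l j := by
        intro l j
        rw [hMapp]
        have : (0:ℝ) ≤ (1 : Matrix (Fin K) (Fin K) ℝ) l j := by
          rw [Matrix.one_apply]; positivity
        nlinarith
      calc α ^ (n+1) * (Q ^ (n+1)) i j
          = ∑ l, (α ^ n * (Q ^ n) i l) * (α * Q l j) := by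
            rw [pow_succ, pow_succ, Matrix.mul_apply, Finset.mul_sum]
            exact Finset.sum_congr rfl fun l _ => by ring
        _ ≤ ∑ l, (M ^ n) i l * M l j :=
            Finset.sum_le_sum fun l _ => mul_le_mul (ih i l) (hMQ l j)
              (mul_nonneg hα0.le (hQnn l j)) (hMpow n i l)
        _ = (M ^ (n+1)) i j := by rw [pow_succ, Matrix.mul_apply]
  have hreach : ∀ i, ∃ n, 0 < (M ^ n) i i0 := by
    intro i
    obtain ⟨n, -, hQn⟩ := hirred i i0
    exact ⟨n, lt_of_lt_of_le (mul_pos (pow_pos hα0 n) hQn) (hdom n i i0)⟩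
  have htend := herding_aux M hMnn hMrowle i0 hM0 hreach
  -- integrability
  have hXm : ∀ n (j : Fin (K+1)), Measurable fun ω => X n ω j :=
    fun n j => (measurable_pi_apply j).comp (hXmeas n)
  have hAm : ∀ n (j : Fin (K+1)), Measurable fun ω => A n ω j :=
    fun n j => (measurable_pi_apply j).comp (hAmeas n)
  have hXint : ∀ n (j : Fin (K+1)), Integrable (fun ω => X n ω j) μ := by
    intro n j
    refine (integrable_const (1:ℝ)).mono' (hXm n j).aestronglyMeasurable ?_
    filter_upwards with ω
    rw [Real.norm_eq_abs, abs_le]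
    exact ⟨by linarith [(hX01 n ω j).1], (hX01 n ω j).2⟩
  have hAint : ∀ n (j : Fin (K+1)), Integrable (fun ω => A n ω j) μ := by
    intro n j
    refine (integrable_const (1:ℝ)).mono' (hAm n j).aestronglyMeasurable ?_
    filter_upwards with ω
    rcases hA01 n ω j with h | h <;> simp [h]
  -- conditional expectation: E[A] = E[X]
  have hAX : ∀ n (j : Fin (K+1)), ∫ ω, A n ω j ∂μ = ∫ ω, X n ω j ∂μ := by
    intro n j
    have h1 : ∫ ω, (μ[(fun ω => A n ω j)|m n]) ω ∂μ = ∫ ω, A n ω j ∂μ :=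
      integral_condExp (hle n)
    have h2 := integral_congr_ae (hmean n j)
    rw [← h1, h2]
  -- the mean opinions
  set f : ℕ → Fin K → ℝ := fun n k => ∫ ω, X n ω k.succ ∂μ with hf
  have hfnn : ∀ n k, 0 ≤ f n k := fun n k =>
    integral_nonneg fun ω => (hX01 n ω k.succ).1
  have hf1 : ∀ n k, f n k ≤ 1 := by
    intro n k
    calc f n k ≤ ∫ _, (1:ℝ) ∂μ :=
          integral_mono (hXint n k.succ) (integrable_const 1)
            (fun ω => (hX01 n ω k.succ).2)
      _ = 1 := by simp
  have hfrec : ∀ n k, f (n+1) k = ∑ j, M k j * f n j := by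
    intro n k
    have hpt : ∀ ω, X (n+1) ω k.succ
        = (1-α) * X n ω k.succ + α * ∑ j : Fin K, Q k j * A n ω j.succ := by
      intro ω
      rw [hupd n ω]
      simp only [Pi.add_apply, Pi.smul_apply, smul_eq_mul, Matrix.mulVec,
        dotProduct]
      congr 1
      rw [Fin.sum_univ_succ, hAstub n ω, mul_zero, zero_add]
      exact congrArg _ (Finset.sum_congr rfl fun j _ => by rw [hQ k j])
    have hint2 : ∀ j : Fin K, Integrable (fun ω => Q k j * A n ω j.succ) μ :=
      fun j => (hAint n j.succ).const_mul _
    calc f (n+1) k = ∫ ω, ((1-α) * X n ω k.succ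
          + α * ∑ j : Fin K, Q k j * A n ω j.succ) ∂μ := by
          rw [hf]; exact integral_congr_ae (Filter.Eventually.of_forall hpt)
      _ = (1-α) * (∫ ω, X n ω k.succ ∂μ)
          + α * ∑ j : Fin K, Q k j * ∫ ω, A n ω j.succ ∂μ := by
          rw [integral_add ((hXint n k.succ).const_mul _)
            ((integrable_finset_sum _ fun j _ => hint2 j).const_mul _),
            integral_const_mul, integral_const_mul,
            integral_finset_sum _ fun j _ => hint2 j]
          congr 1
          rw [mul_eq_mul_left_iff]
          left
          exact Finset.sum_congr rfl fun j _ => integral_const_mul _ _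
      _ = (1-α) * f n k + α * ∑ j : Fin K, Q k j * f n j := by
          rw [hf]
          congr 1
          rw [mul_eq_mul_left_iff]
          left
          exact Finset.sum_congr rfl fun j _ => by rw [hAX n j.succ]
      _ = ∑ j, M k j * f n j := by
          simp only [hMapp, add_mul, Finset.sum_add_distrib, mul_assoc,
            ← Finset.mul_sum]
          congr 1
          rw [mul_eq_mul_left_iff]
          left
          simp [Matrix.one_apply, Finset.sum_ite_eq]
  -- comparison with row sums of M^n
  have hfS : ∀ n k, f n k ≤ ∑ j, (M ^ n) k j := by
    intro n
    induction n with
    | zero => intro k; simpa [Matrix.one_apply] using hf1 0 k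
    | succ n ih =>
      intro k
      rw [hfrec n k]
      have hS : ∑ j, (M ^ (n+1)) k j = ∑ l, M k l * (∑ j, (M ^ n) l j) := by
        rw [pow_succ']
        simp only [Matrix.mul_apply]
        rw [Finset.sum_comm]
        exact Finset.sum_congr rfl fun l _ => (Finset.mul_sum _ _ _).symm
      rw [hS]
      exact Finset.sum_le_sum fun l _ =>
        mul_le_mul_of_nonneg_left (ih l) (hMnn k l)
  have htendf : ∀ k, Tendsto (fun n => f n k) atTop (nhds 0) := fun k =>
    tendsto_of_tendsto_of_tendsto_of_le_of_le tendsto_const_nhds (htend k)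
      (fun n => hfnn n k) (fun n => hfS n k)
  -- Markov's inequality and conclusion
  intro ε hε k
  have hub : ∀ n, μ {ω | ε < X n ω k.succ} ≤ ENNReal.ofReal (f n k / ε) := by
    intro n
    have h1 : μ {ω | ε < X n ω k.succ} ≤ μ {ω | ε ≤ X n ω k.succ} :=
      measure_mono fun ω (h : ε < X n ω k.succ) => h.le
    have h2 := mul_meas_ge_le_integral_of_nonneg
      (Filter.Eventually.of_forall fun ω => (hX01 n ω k.succ).1)
      (hXint n k.succ) ε
    have h3 : (μ {ω | ε ≤ X n ω k.succ}).toReal ≤ f n k / ε := by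
      rw [le_div_iff₀ hε, mul_comm]
      exact h2
    refine h1.trans ?_
    rw [ENNReal.le_ofReal_iff_toReal_le (measure_ne_top μ _)
      (div_nonneg (hfnn n k) hε.le)]
    exact h3
  have hup : Tendsto (fun n => ENNReal.ofReal (f n k / ε)) atTop (nhds 0) := by
    have h := (htendf k).div_const ε
    rw [zero_div] at h
    simpa using ENNReal.tendsto_ofReal h
  exact tendsto_of_tendsto_of_tendsto_of_le_of_le tendsto_const_nhds hup
    (fun n => zero_le) hub
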